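/- For all integers m, n ≥ 1, the identity w_n·U_{m+1} + q·w_{n−1}·U_m = W_{n+m} holds, where w_n·U_{m+1} denotes scalar multiplication of the quaternion U_{m+1} by the real number w_n. -/

import Mathlib

open Quaternion

theorem stmt3 (p q : ℝ) (w : ℕ → ℝ) (hw : ∀ n, w (n + 2) = p * w (n + 1) + q * w n)
    (W : ℕ → ℍ[ℝ]) (hW : ∀ n, W n = ⟨w n, w (n + 1), w (n + 2), w (n + 3)⟩)
    (u : ℕ → ℝ) (hu : ∀ n, u (n + 2) = p * u (n + 1) + q * u n)
    (hu0 : u 0 = 0) (hu1 : u 1 = 1)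
    (U : ℕ → ℍ[ℝ]) (hU : ∀ n, U n = ⟨u n, u (n + 1), u (n + 2), u (n + 3)⟩)
    (m n : ℕ) (hm : 1 ≤ m) (hn : 1 ≤ n) :
    w n • U (m + 1) + (q * w (n - 1)) • U m = W (n + m) := by
  obtain ⟨a, rfl⟩ : ∃ a, n = a + 1 := ⟨n - 1, by omega⟩
  have hsub : a + 1 - 1 = a := rfl
  have key : ∀ k, w (a + 1 + k) = w (a + 1) * u (k + 1) + q * w a * u k := by
    intro k
    induction k using Nat.twoStepInduction with
    | zero => simp [hu0, hu1]
    | one =>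
      have h1 := hw a
      have h2 := hu 0
      simp [hu0, hu1] at h2
      rw [show a + 1 + 1 = a + 2 from rfl, h1, h2, hu1]; ring
    | more k ih1 ih2 =>
      have h1 : w (a + 1 + (k + 2)) = p * w (a + 1 + (k + 1)) + q * w (a + 1 + k) := by
        have := hw (a + 1 + k); rw [show a + 1 + (k + 2) = a + 1 + k + 2 by omega, show a + 1 + (k + 1) = a + 1 + k + 1 by omega]; exact this
      rw [h1, ih1, ih2, show k + 2 + 1 = k + 1 + 2 from rfl, hu (k + 1), hu k]; ring
  rw [hW, hU, hU, hsub]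
  ext <;> simp
  · exact (key m).symm
  · exact (key (m + 1)).symm
  · exact (key (m + 2)).symm
  · exact (key (m + 3)).symm
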